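/- (Nikolskii approximation quality of time averages) Let X be a Banach space, α ∈ (0,1), r ∈ [1,∞), and let (Ω, F, P) be a probability space. Let u : Ω × [0,T] → X be jointly measurable such that for P-a.e. ω the path u(ω,·) is Bochner r-integrable on [0,T] and the Nikolskii seminorm [u(ω)] := sup_{0 < h ≤ T} h^{−α} (∫_{[0, T−h]} ‖u(ω, s+h) − u(ω, s)‖_X^r ds)^{1/r} is finite, with ω ↦ [u(ω)] square-integrable over Ω. Then there is a constant C depending only on α and r (one may take C = (2^{αr+1}/(αr+1))^{1/r}) such that ( E[ ( Σ_{m=1}^M ∫_{I_m} ‖u(s) − ⟨u⟩_m‖_X^r ds )^{2/r} ] )^{1/2} ≤ C τ^α ( E[ [u]² ] )^{1/2}. -/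

import Mathlib

set_option maxHeartbeats 1000000

open MeasureTheory
open scoped ENNReal NNReal

lemma jensen_aux {X : Type*} [NormedAddCommGroup X] [NormedSpace ℝ X] [CompleteSpace X]
    (r τ : ℝ) (hr : 1 ≤ r) (hτ : 0 < τ) (a b : ℝ) (hab : b - a = τ)
    (f : ℝ → X) (hf : AEStronglyMeasurable f (volume.restrict (Set.Icc a b))) (v : X) :
    ENNReal.ofReal (‖v - (1 / τ) • ∫ t in Set.Icc a b, f t‖ ^ r)
      ≤ (ENNReal.ofReal τ)⁻¹ * ∫⁻ t in Set.Icc a b, ENNReal.ofReal (‖f t - v‖ ^ r) := by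
  have hr0 : 0 < r := lt_of_lt_of_le one_pos hr
  set ν := volume.restrict (Set.Icc a b) with hνdef
  have hν : ν Set.univ = ENNReal.ofReal τ := by
    rw [Measure.restrict_apply_univ, Real.volume_Icc, hab]
  set L := ∫⁻ t in Set.Icc a b, ENNReal.ofReal (‖f t - v‖ ^ r) with hLdef
  by_cases hL : L = ⊤
  · rw [hL, ENNReal.mul_top (by simp [ENNReal.inv_ne_zero])]
    exact le_top
  set g : ℝ → X := fun t => f t - v with hgdef
  have hg_meas : AEStronglyMeasurable g ν := hf.sub aestronglyMeasurable_const
  have key : ∀ t : ℝ, ENNReal.ofReal (‖g t‖ ^ r) = (‖g t‖₊ : ℝ≥0∞) ^ r := by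
    intro t
    rw [← ENNReal.ofReal_rpow_of_nonneg (norm_nonneg _) hr0.le, ofReal_norm]
    rfl
  set p := ENNReal.ofReal r with hpdef
  have hp0 : p ≠ 0 := by simp [hpdef, ENNReal.ofReal_eq_zero, not_le, hr0]
  have hpt : p ≠ ⊤ := ENNReal.ofReal_ne_top
  have hpr : p.toReal = r := ENNReal.toReal_ofReal hr0.le
  have h1p : (1 : ℝ≥0∞) ≤ p := by
    rw [hpdef, ← ENNReal.ofReal_one]
    exact ENNReal.ofReal_le_ofReal hr
  have heL : eLpNorm g p ν = L ^ (1 / r) := by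
    rw [eLpNorm_eq_lintegral_rpow_enorm_toReal hp0 hpt, hpr]
    congr 1
    rw [hLdef]
    refine lintegral_congr fun t => ?_
    exact (key t).symm
  have hmem : MemLp g p ν :=
    ⟨hg_meas, by rw [heL]; exact ENNReal.rpow_lt_top_of_nonneg (by positivity) hL⟩
  haveI : IsFiniteMeasure ν := ⟨by rw [hν]; exact ENNReal.ofReal_lt_top⟩
  have hint_g : Integrable g ν := hmem.integrable h1p
  have hint_f : Integrable f ν := by
    have h := hint_g.add (integrable_const v)
    have he : (g + fun _ => v) = f := funext fun t => by simp [hgdef]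
    rwa [he] at h
  have hc : v - (1 / τ) • ∫ t, f t ∂ν = (1 / τ) • ∫ t, (v - f t) ∂ν := by
    rw [integral_sub (integrable_const v) hint_f, integral_const, measureReal_def, hν,
      ENNReal.toReal_ofReal hτ.le, smul_sub, smul_smul, one_div, inv_mul_cancel₀ hτ.ne',
      one_smul]
  have h1 : ‖v - (1 / τ) • ∫ t, f t ∂ν‖ ≤ (1 / τ) * ∫ t, ‖v - f t‖ ∂ν := by
    rw [hc, norm_smul, Real.norm_eq_abs, abs_of_pos (by positivity)]
    exact mul_le_mul_of_nonneg_left (norm_integral_le_integral_norm _) (by positivity)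
  have h2 : ∫ t, ‖v - f t‖ ∂ν = (∫⁻ t, ENNReal.ofReal ‖g t‖ ∂ν).toReal := by
    rw [integral_eq_lintegral_of_nonneg_ae (Filter.Eventually.of_forall fun t => norm_nonneg _)
      (hg_meas.norm.congr (Filter.Eventually.of_forall fun t => by
        simp [hgdef, norm_sub_rev]))]
    congr 1
    exact lintegral_congr fun t => by rw [norm_sub_rev]
  have h3 : (∫⁻ t, ENNReal.ofReal ‖g t‖ ∂ν) = eLpNorm g 1 ν := by
    rw [eLpNorm_one_eq_lintegral_enorm]
    exact lintegral_congr fun t => ofReal_norm _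
  have h4 : eLpNorm g 1 ν ≤ L ^ (1 / r) * (ENNReal.ofReal τ) ^ (1 - 1 / r) := by
    have := eLpNorm_le_eLpNorm_mul_rpow_measure_univ (p := 1) (q := p) h1p hg_meas
    rw [heL, hν] at this
    simpa [ENNReal.toReal_one, hpr] using this
  set x := ENNReal.ofReal τ with hxdef
  have hx0 : x ≠ 0 := by simp [hxdef, hτ, ENNReal.ofReal_eq_zero, not_le]
  have hxt : x ≠ ⊤ := ENNReal.ofReal_ne_top
  have hxr0 : x ^ (r - 1) ≠ 0 := (ENNReal.rpow_pos (hx0.bot_lt) hxt).ne'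
  have hxrt : x ^ (r - 1) ≠ ⊤ := ENNReal.rpow_ne_top_of_nonneg (by linarith) hxt
  calc ENNReal.ofReal (‖v - (1 / τ) • ∫ t, f t ∂ν‖ ^ r)
      = (ENNReal.ofReal ‖v - (1 / τ) • ∫ t, f t ∂ν‖) ^ r :=
        (ENNReal.ofReal_rpow_of_nonneg (norm_nonneg _) hr0.le).symm
    _ ≤ (ENNReal.ofReal ((1 / τ) * ∫ t, ‖v - f t‖ ∂ν)) ^ r :=
        ENNReal.rpow_le_rpow (ENNReal.ofReal_le_ofReal h1) hr0.le
    _ = (x⁻¹ * ENNReal.ofReal (∫ t, ‖v - f t‖ ∂ν)) ^ r := by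
        rw [ENNReal.ofReal_mul (by positivity), one_div, ENNReal.ofReal_inv_of_pos hτ]
    _ ≤ (x⁻¹ * (L ^ (1 / r) * x ^ (1 - 1 / r))) ^ r := by
        refine ENNReal.rpow_le_rpow (mul_le_mul_right ?_ _) hr0.le
        rw [h2]
        exact le_trans ENNReal.ofReal_toReal_le (by rw [h3]; exact h4)
    _ = x⁻¹ ^ r * ((L ^ (1 / r)) ^ r * (x ^ (1 - 1 / r)) ^ r) := by
        rw [ENNReal.mul_rpow_of_nonneg _ _ hr0.le, ENNReal.mul_rpow_of_nonneg _ _ hr0.le]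
    _ = (x ^ r)⁻¹ * (L * x ^ (r - 1)) := by
        rw [ENNReal.inv_rpow, ← ENNReal.rpow_mul L, ← ENNReal.rpow_mul x,
          one_div_mul_cancel hr0.ne', ENNReal.rpow_one]
        congr 2
        field_simp
    _ = x⁻¹ * L := by
        have hxs : x ^ r = x ^ (r - 1) * x := by
          conv_lhs => rw [show r = (r - 1) + 1 by ring]
          rw [ENNReal.rpow_add _ _ hx0 hxt, ENNReal.rpow_one]
        rw [hxs, ENNReal.mul_inv (Or.inl hxr0) (Or.inl hxrt)]
        calc (x ^ (r - 1))⁻¹ * x⁻¹ * (L * x ^ (r - 1))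
            = x⁻¹ * L * ((x ^ (r - 1))⁻¹ * x ^ (r - 1)) := by ring
          _ = x⁻¹ * L := by rw [ENNReal.inv_mul_cancel hxr0 hxrt, mul_one]

lemma shift_bound {X : Type*} [NormedAddCommGroup X] [NormedSpace ℝ X] [CompleteSpace X]
    (α r T : ℝ) (hα : 0 < α) (hr : 1 ≤ r) (hT : 0 < T)
    (f : ℝ → X) (hf : StronglyMeasurable f)
    (hint : MemLp f (ENNReal.ofReal r) (volume.restrict (Set.Icc 0 T)))
    (hbdd : BddAbove {x : ℝ | ∃ h ∈ Set.Ioc (0 : ℝ) T,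
      x = h ^ (-α) * (∫ s in Set.Icc (0 : ℝ) (T - h), ‖f (s + h) - f s‖ ^ r) ^ (1 / r)})
    (h : ℝ) (hh : h ∈ Set.Ioc (0 : ℝ) T) :
    ∫⁻ s in Set.Icc (0 : ℝ) (T - h), ENNReal.ofReal (‖f (s + h) - f s‖ ^ r)
      ≤ ENNReal.ofReal (h ^ (α * r) * (sSup {x : ℝ | ∃ h ∈ Set.Ioc (0 : ℝ) T,
      x = h ^ (-α) * (∫ s in Set.Icc (0 : ℝ) (T - h), ‖f (s + h) - f s‖ ^ r) ^ (1 / r)}) ^ r) := by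
  have hr0 : 0 < r := lt_of_lt_of_le one_pos hr
  set S := {x : ℝ | ∃ h ∈ Set.Ioc (0 : ℝ) T,
      x = h ^ (-α) * (∫ s in Set.Icc (0 : ℝ) (T - h), ‖f (s + h) - f s‖ ^ r) ^ (1 / r)} with hSdef
  set K := sSup S with hKdef
  set p := ENNReal.ofReal r with hpdef
  have hp0 : p ≠ 0 := by simp [hpdef, ENNReal.ofReal_eq_zero, not_le, hr0]
  have hpt : p ≠ ⊤ := ENNReal.ofReal_ne_top
  have hpr : p.toReal = r := ENNReal.toReal_ofReal hr0.le
  have hsub : Set.Icc h T ⊆ Set.Icc 0 T := Set.Icc_subset_Icc hh.1.le le_rfl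
  have hsub2 : Set.Icc (0 : ℝ) (T - h) ⊆ Set.Icc 0 T :=
    Set.Icc_subset_Icc le_rfl (by linarith [hh.1])
  have hpre : ((· + h) ⁻¹' Set.Icc h T) = Set.Icc 0 (T - h) := by
    ext x
    simp only [Set.mem_preimage, Set.mem_Icc]
    constructor <;> rintro ⟨h1, h2⟩ <;> constructor <;> linarith
  have hmap : Measure.map (· + h) (volume.restrict (Set.Icc 0 (T - h)))
      = volume.restrict (Set.Icc h T) := by
    have h1 := Measure.restrict_map (measurable_add_const h)
      (measurableSet_Icc (a := h) (b := T)) (μ := volume)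
    rw [map_add_right_eq_self, hpre] at h1
    exact h1.symm
  have hmem1 : MemLp f p (volume.restrict (Set.Icc h T)) :=
    hint.mono_measure (Measure.restrict_mono hsub le_rfl)
  have hmem2 : MemLp (fun s => f (s + h)) p (volume.restrict (Set.Icc 0 (T - h))) := by
    rw [← hmap] at hmem1
    exact ((MeasurableEquiv.addRight h).measurableEmbedding.memLp_map_measure_iff).mp hmem1
  have hmem3 : MemLp (fun s => f (s + h) - f s) p (volume.restrict (Set.Icc 0 (T - h))) :=
    hmem2.sub (hint.mono_measure (Measure.restrict_mono hsub2 le_rfl))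
  have hI : Integrable (fun s => ‖f (s + h) - f s‖ ^ r)
      (volume.restrict (Set.Icc (0 : ℝ) (T - h))) := by
    have := hmem3.integrable_norm_rpow hp0 hpt
    simpa [hpr] using this
  have hnn : 0 ≤ᵐ[volume.restrict (Set.Icc (0 : ℝ) (T - h))]
      fun s => ‖f (s + h) - f s‖ ^ r :=
    Filter.Eventually.of_forall fun s => Real.rpow_nonneg (norm_nonneg _) r
  have heq : (∫⁻ s in Set.Icc (0 : ℝ) (T - h), ENNReal.ofReal (‖f (s + h) - f s‖ ^ r))
      = ENNReal.ofReal (∫ s in Set.Icc (0 : ℝ) (T - h), ‖f (s + h) - f s‖ ^ r) :=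
    (ofReal_integral_eq_lintegral_ofReal hI hnn).symm
  set I := ∫ s in Set.Icc (0 : ℝ) (T - h), ‖f (s + h) - f s‖ ^ r with hIdef
  have hInn : 0 ≤ I := integral_nonneg fun s => Real.rpow_nonneg (norm_nonneg _) r
  have hle : h ^ (-α) * I ^ (1 / r) ≤ K := le_csSup hbdd ⟨h, hh, rfl⟩
  have hKnn : 0 ≤ K := by
    refine le_csSup hbdd ?_
    refine ⟨T, ⟨hT, le_rfl⟩, ?_⟩
    rw [sub_self]
    have : volume.restrict (Set.Icc (0 : ℝ) 0) = 0 := by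
      rw [Measure.restrict_eq_zero]
      simp
    rw [this, integral_zero_measure, Real.zero_rpow (by positivity : (1 : ℝ) / r ≠ 0),
      mul_zero]
  have h5 : I ^ (1 / r) ≤ h ^ α * K := by
    have h6 := mul_le_mul_of_nonneg_left hle (Real.rpow_pos_of_pos hh.1 α).le
    rwa [← mul_assoc, ← Real.rpow_add hh.1, add_neg_cancel, Real.rpow_zero, one_mul] at h6
  have h7 : I ≤ h ^ (α * r) * K ^ r := by
    have h8 := Real.rpow_le_rpow (Real.rpow_nonneg hInn _) h5 hr0.le
    rw [← Real.rpow_mul hInn, one_div_mul_cancel hr0.ne', Real.rpow_one,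
      Real.mul_rpow (Real.rpow_nonneg hh.1.le _) hKnn, ← Real.rpow_mul hh.1.le] at h8
    exact h8
  rw [heq]
  exact ENNReal.ofReal_le_ofReal h7

lemma pointwise_bound {X : Type*} [NormedAddCommGroup X] [NormedSpace ℝ X] [CompleteSpace X]
    (α r T τ : ℝ) (hα : 0 < α) (hr : 1 ≤ r) (hT : 0 < T) (M : ℕ) (hM : 1 ≤ M)
    (hτ : τ = T / M)
    (f : ℝ → X) (hf : StronglyMeasurable f)
    (hint : MemLp f (ENNReal.ofReal r) (volume.restrict (Set.Icc 0 T)))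
    (hbdd : BddAbove {x : ℝ | ∃ h ∈ Set.Ioc (0 : ℝ) T,
      x = h ^ (-α) * (∫ s in Set.Icc (0 : ℝ) (T - h), ‖f (s + h) - f s‖ ^ r) ^ (1 / r)}) :
    (∑ m ∈ Finset.Icc 1 M, ∫ s in Set.Icc (((m : ℝ) - 1) * τ) ((m : ℝ) * τ),
        ‖f s - (1 / τ) • ∫ t in Set.Icc (((m : ℝ) - 1) * τ) ((m : ℝ) * τ), f t‖ ^ r)
      ≤ (2 / (α * r + 1)) * τ ^ (α * r) * (sSup {x : ℝ | ∃ h ∈ Set.Ioc (0 : ℝ) T,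
      x = h ^ (-α) * (∫ s in Set.Icc (0 : ℝ) (T - h), ‖f (s + h) - f s‖ ^ r) ^ (1 / r)}) ^ r := by
  have hr0 : 0 < r := lt_of_lt_of_le one_pos hr
  have hM0 : (0 : ℝ) < M := by exact_mod_cast hM
  have hτ0 : 0 < τ := by rw [hτ]; positivity
  have hMτ : (M : ℝ) * τ = T := by rw [hτ]; field_simp
  have hτT : τ ≤ T := by
    rw [hτ]
    exact div_le_self hT.le (by exact_mod_cast hM)
  set S := {x : ℝ | ∃ h ∈ Set.Ioc (0 : ℝ) T,
      x = h ^ (-α) * (∫ s in Set.Icc (0 : ℝ) (T - h), ‖f (s + h) - f s‖ ^ r) ^ (1 / r)} with hSdef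
  set K := sSup S with hKdef
  have hKnn : 0 ≤ K := by
    refine le_csSup hbdd ⟨T, ⟨hT, le_rfl⟩, ?_⟩
    rw [sub_self]
    have hz : volume.restrict (Set.Icc (0 : ℝ) 0) = 0 := by
      rw [Measure.restrict_eq_zero]; simp
    rw [hz, integral_zero_measure, Real.zero_rpow (by positivity : (1 : ℝ) / r ≠ 0), mul_zero]
  -- notation
  set Ψ : ℝ → ℝ → ℝ≥0∞ := fun s t => ENNReal.ofReal (‖f t - f s‖ ^ r) with hΨdef
  set χ : ℝ → ℝ≥0∞ := (Set.Icc (0 : ℝ) T).indicator (fun _ => (1 : ℝ≥0∞)) with hχdef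
  have hχmem : ∀ t ∈ Set.Icc (0 : ℝ) T, χ t = 1 := fun t ht => Set.indicator_of_mem ht _
  have hχm : Measurable χ := measurable_const.indicator measurableSet_Icc
  have hΨm : Measurable (fun q : ℝ × ℝ => Ψ q.1 q.2) := by
    have h1 : StronglyMeasurable (fun q : ℝ × ℝ => f q.2 - f q.1) :=
      (hf.comp_measurable measurable_snd).sub (hf.comp_measurable measurable_fst)
    exact (h1.norm.measurable.pow_const r).ennreal_ofReal
  have hΨsymm : ∀ s t, Ψ s t = Ψ t s := by
    intro s t; rw [hΨdef]; simp only [norm_sub_rev]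
  have hΨdiag : ∀ s, Ψ s s = 0 := by
    intro s
    rw [hΨdef]
    simp [Real.zero_rpow hr0.ne']
  -- the inner-h bound
  have hN : ∀ h' ∈ Set.Icc (-τ) τ,
      (∫⁻ s in Set.Ico (0 : ℝ) T, χ (h' + s) * Ψ s (h' + s))
        ≤ ENNReal.ofReal (|h'| ^ (α * r) * K ^ r) := by
    intro h' hh'
    rcases lt_trichotomy h' 0 with hneg | hzero | hpos
    · -- negative case
      set g : ℝ := -h' with hgdef
      have hg0 : 0 < g := by rw [hgdef]; linarith
      have hgT : g ∈ Set.Ioc (0 : ℝ) T := ⟨hg0, by rw [hgdef]; linarith [hh'.1, hτT]⟩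
      have habs : |h'| = g := abs_of_neg hneg
      set F : ℝ → ℝ≥0∞ :=
        fun s => (Set.Ico (0 : ℝ) T).indicator (fun s => χ (h' + s) * Ψ s (h' + s)) s with hFdef
      have m1 : Measurable fun s : ℝ => χ (h' + s) :=
        hχm.comp (measurable_const.add measurable_id)
      have m2 : Measurable fun s : ℝ => Ψ s (h' + s) :=
        hΨm.comp (measurable_id.prodMk (measurable_const.add measurable_id))
      have hFm : Measurable F := (m1.mul m2).indicator measurableSet_Ico
      calc ∫⁻ s in Set.Ico (0 : ℝ) T, χ (h' + s) * Ψ s (h' + s)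
          = ∫⁻ s, F s := (lintegral_indicator measurableSet_Ico _).symm
        _ = ∫⁻ σ, F (σ + g) :=
            ((measurePreserving_add_right volume g).lintegral_comp hFm).symm
        _ ≤ ∫⁻ σ, (Set.Icc (0 : ℝ) (T - g)).indicator (fun σ => Ψ σ (σ + g)) σ := by
            refine lintegral_mono fun σ => ?_
            rw [hFdef]
            beta_reduce
            by_cases hm : σ + g ∈ Set.Ico (0 : ℝ) T
            · rw [Set.indicator_of_mem hm]
              have he : h' + (σ + g) = σ := by rw [hgdef]; ring
              rw [he]
              by_cases hm2 : σ ∈ Set.Icc (0 : ℝ) T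
              · have hmem : σ ∈ Set.Icc (0 : ℝ) (T - g) := ⟨hm2.1, by linarith [hm.2]⟩
                rw [hχmem _ hm2, one_mul, Set.indicator_of_mem hmem, hΨsymm]
              · rw [hχdef, Set.indicator_of_notMem hm2, zero_mul]
                exact zero_le
            · rw [Set.indicator_of_notMem hm]
              exact zero_le
        _ = ∫⁻ σ in Set.Icc (0 : ℝ) (T - g), Ψ σ (σ + g) :=
            lintegral_indicator measurableSet_Icc _
        _ = ∫⁻ σ in Set.Icc (0 : ℝ) (T - g), ENNReal.ofReal (‖f (σ + g) - f σ‖ ^ r) := by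
            refine lintegral_congr fun σ => ?_
            rw [hΨdef]
        _ ≤ ENNReal.ofReal (g ^ (α * r) * K ^ r) :=
            shift_bound α r T hα hr hT f hf hint hbdd g hgT
        _ = ENNReal.ofReal (|h'| ^ (α * r) * K ^ r) := by rw [habs]
    · -- zero case
      subst hzero
      have : ∀ s : ℝ, χ (0 + s) * Ψ s (0 + s) = 0 := by
        intro s; rw [zero_add, hΨdiag, mul_zero]
      simp only [this]
      rw [lintegral_zero]
      exact zero_le
    · -- positive case
      have hhT : h' ∈ Set.Ioc (0 : ℝ) T := ⟨hpos, le_trans hh'.2 hτT⟩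
      have habs : |h'| = h' := abs_of_pos hpos
      calc ∫⁻ s in Set.Ico (0 : ℝ) T, χ (h' + s) * Ψ s (h' + s)
          = ∫⁻ s, (Set.Ico (0 : ℝ) T).indicator (fun s => χ (h' + s) * Ψ s (h' + s)) s :=
            (lintegral_indicator measurableSet_Ico _).symm
        _ ≤ ∫⁻ s, (Set.Icc (0 : ℝ) (T - h')).indicator (fun s => Ψ s (h' + s)) s := by
            refine lintegral_mono fun s => ?_
            by_cases h1 : s ∈ Set.Ico (0 : ℝ) T
            · rw [Set.indicator_of_mem h1]
              by_cases h2 : h' + s ∈ Set.Icc (0 : ℝ) T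
              · have h3 : s ∈ Set.Icc (0 : ℝ) (T - h') := ⟨h1.1, by linarith [h2.2]⟩
                rw [hχmem _ h2, one_mul, Set.indicator_of_mem h3]
              · rw [hχdef, Set.indicator_of_notMem h2, zero_mul]
                exact zero_le
            · rw [Set.indicator_of_notMem h1]
              exact zero_le
        _ = ∫⁻ s in Set.Icc (0 : ℝ) (T - h'), Ψ s (h' + s) :=
            lintegral_indicator measurableSet_Icc _
        _ = ∫⁻ s in Set.Icc (0 : ℝ) (T - h'), ENNReal.ofReal (‖f (s + h') - f s‖ ^ r) := by
            refine lintegral_congr fun s => ?_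
            rw [hΨdef, add_comm]
        _ ≤ ENNReal.ofReal (h' ^ (α * r) * K ^ r) :=
            shift_bound α r T hα hr hT f hf hint hbdd h' hhT
        _ = ENNReal.ofReal (|h'| ^ (α * r) * K ^ r) := by rw [habs]
  -- measurability of R
  have huncur : Measurable (fun p : ℝ × ℝ => χ (p.2 + p.1) * Ψ p.1 (p.2 + p.1)) := by
    have mm : Measurable fun p : ℝ × ℝ => p.2 + p.1 := measurable_snd.add measurable_fst
    exact (hχm.comp mm).mul (hΨm.comp (measurable_fst.prodMk mm))
  have hRm : Measurable (fun s : ℝ => ∫⁻ h' in Set.Icc (-τ) τ, χ (h' + s) * Ψ s (h' + s)) :=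
    huncur.lintegral_prod_right'
  set R : ℝ → ℝ≥0∞ := fun s => ∫⁻ h' in Set.Icc (-τ) τ, χ (h' + s) * Ψ s (h' + s) with hRdef
  -- Tonelli
  have hTon : ∫⁻ s in Set.Ico (0 : ℝ) T, R s
      = ∫⁻ h' in Set.Icc (-τ) τ, ∫⁻ s in Set.Ico (0 : ℝ) T, χ (h' + s) * Ψ s (h' + s) := by
    rw [hRdef]
    exact lintegral_lintegral_swap huncur.aemeasurable
  -- integral of |h'|^(αr)
  have harpos : 0 < α * r := by positivity
  have habs_cont : Continuous fun h' : ℝ => |h'| ^ (α * r) :=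
    continuous_abs.rpow_const fun x => Or.inr harpos.le
  have hint_abs : IntegrableOn (fun h' : ℝ => |h'| ^ (α * r) * K ^ r) (Set.Icc (-τ) τ) :=
    (habs_cont.mul continuous_const).integrableOn_Icc
  have hIabs : (∫ h' in Set.Icc (-τ) τ, |h'| ^ (α * r) * K ^ r)
      = (2 * (τ ^ (α * r + 1) / (α * r + 1))) * K ^ r := by
    rw [MeasureTheory.integral_mul_const]
    congr 1
    have h1 : (∫ h' in Set.Icc (-τ) τ, |h'| ^ (α * r))
        = ∫ h' in (-τ)..τ, |h'| ^ (α * r) := by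
      rw [intervalIntegral.integral_of_le (by linarith), integral_Icc_eq_integral_Ioc]
    have hpos_part : (∫ h' in (0 : ℝ)..τ, |h'| ^ (α * r)) = τ ^ (α * r + 1) / (α * r + 1) := by
      have h2 : (∫ h' in (0 : ℝ)..τ, |h'| ^ (α * r)) = ∫ h' in (0 : ℝ)..τ, h' ^ (α * r) := by
        refine intervalIntegral.integral_congr fun x hx => ?_
        rw [Set.uIcc_of_le (by linarith : (0 : ℝ) ≤ τ)] at hx
        rw [abs_of_nonneg hx.1]
      rw [h2, integral_rpow (Or.inl (by linarith))]
      rw [Real.zero_rpow (by positivity : α * r + 1 ≠ 0), sub_zero]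
    have hneg_part : (∫ h' in (-τ)..(0 : ℝ), |h'| ^ (α * r))
        = ∫ h' in (0 : ℝ)..τ, |h'| ^ (α * r) := by
      have h3 := intervalIntegral.integral_comp_neg (a := (0 : ℝ)) (b := τ)
        (f := fun h' : ℝ => |h'| ^ (α * r))
      simp only [abs_neg, neg_zero] at h3
      exact h3.symm
    have hsplit : (∫ h' in (-τ)..τ, |h'| ^ (α * r))
        = (∫ h' in (-τ)..(0 : ℝ), |h'| ^ (α * r)) + ∫ h' in (0 : ℝ)..τ, |h'| ^ (α * r) :=
      (intervalIntegral.integral_add_adjacent_intervals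
        (habs_cont.intervalIntegrable _ _) (habs_cont.intervalIntegrable _ _)).symm
    rw [h1, hsplit, hneg_part, hpos_part]
    ring
  -- bound the h'-integral
  have hbound_lint : (∫⁻ h' in Set.Icc (-τ) τ, ∫⁻ s in Set.Ico (0 : ℝ) T, χ (h' + s) * Ψ s (h' + s))
      ≤ ENNReal.ofReal ((2 * (τ ^ (α * r + 1) / (α * r + 1))) * K ^ r) := by
    calc (∫⁻ h' in Set.Icc (-τ) τ, ∫⁻ s in Set.Ico (0 : ℝ) T, χ (h' + s) * Ψ s (h' + s))
        ≤ ∫⁻ h' in Set.Icc (-τ) τ, ENNReal.ofReal (|h'| ^ (α * r) * K ^ r) :=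
          setLIntegral_mono ((habs_cont.mul continuous_const).measurable.ennreal_ofReal) hN
      _ = ENNReal.ofReal (∫ h' in Set.Icc (-τ) τ, |h'| ^ (α * r) * K ^ r) :=
          (ofReal_integral_eq_lintegral_ofReal hint_abs
            (Filter.Eventually.of_forall fun x => by positivity)).symm
      _ = ENNReal.ofReal ((2 * (τ ^ (α * r + 1) / (α * r + 1))) * K ^ r) := by rw [hIabs]
  -- step 2: window per m
  have hstep2 : ∀ m ∈ Finset.Icc 1 M, ∀ s ∈ Set.Icc (((m : ℝ) - 1) * τ) ((m : ℝ) * τ),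
      (∫⁻ t in Set.Icc (((m : ℝ) - 1) * τ) ((m : ℝ) * τ), Ψ s t) ≤ R s := by
    intro m hm s hs
    obtain ⟨hm1, hm2⟩ := Finset.mem_Icc.mp hm
    have hm1' : (1 : ℝ) ≤ (m : ℝ) := by exact_mod_cast hm1
    have hm2' : ((m : ℝ)) ≤ (M : ℝ) := by exact_mod_cast hm2
    have ha0 : 0 ≤ ((m : ℝ) - 1) * τ := by nlinarith
    have hbT : (m : ℝ) * τ ≤ T := by nlinarith
    have hsub : Set.Icc (((m : ℝ) - 1) * τ) ((m : ℝ) * τ) ⊆ Set.Icc 0 T :=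
      Set.Icc_subset_Icc ha0 hbT
    have hGm : Measurable ((Set.Icc (s - τ) (s + τ)).indicator (fun t => χ t * Ψ s t)) := by
      refine Measurable.indicator ?_ measurableSet_Icc
      exact hχm.mul (hΨm.comp (measurable_const.prodMk measurable_id))
    calc ∫⁻ t in Set.Icc (((m : ℝ) - 1) * τ) ((m : ℝ) * τ), Ψ s t
        = ∫⁻ t, (Set.Icc (((m : ℝ) - 1) * τ) ((m : ℝ) * τ)).indicator (fun t => Ψ s t) t :=
          (lintegral_indicator measurableSet_Icc _).symm
      _ ≤ ∫⁻ t, (Set.Icc (s - τ) (s + τ)).indicator (fun t => χ t * Ψ s t) t := by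
          refine lintegral_mono fun t => ?_
          by_cases h1 : t ∈ Set.Icc (((m : ℝ) - 1) * τ) ((m : ℝ) * τ)
          · have h2 : t ∈ Set.Icc (s - τ) (s + τ) := by
              obtain ⟨hl, hu⟩ := h1
              obtain ⟨hl', hu'⟩ := hs
              constructor <;> [linarith; linarith]
            rw [Set.indicator_of_mem h1, Set.indicator_of_mem h2, hχmem _ (hsub h1), one_mul]
          · rw [Set.indicator_of_notMem h1]
            exact zero_le
      _ = ∫⁻ h', (Set.Icc (s - τ) (s + τ)).indicator (fun t => χ t * Ψ s t) (h' + s) :=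
          ((measurePreserving_add_right volume s).lintegral_comp hGm).symm
      _ = ∫⁻ h', (Set.Icc (-τ) τ).indicator (fun h' => χ (h' + s) * Ψ s (h' + s)) h' := by
          refine lintegral_congr fun h' => ?_
          by_cases h1 : h' ∈ Set.Icc (-τ) τ
          · have h2 : h' + s ∈ Set.Icc (s - τ) (s + τ) :=
              ⟨by linarith [h1.1], by linarith [h1.2]⟩
            rw [Set.indicator_of_mem h1, Set.indicator_of_mem h2]
          · have h2 : h' + s ∉ Set.Icc (s - τ) (s + τ) := by
              intro hc
              exact h1 ⟨by linarith [hc.1], by linarith [hc.2]⟩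
            rw [Set.indicator_of_notMem h1, Set.indicator_of_notMem h2]
      _ = R s := by rw [hRdef]; exact lintegral_indicator measurableSet_Icc _
  -- sum over m of set-lintegrals of R
  have hdisj : Set.PairwiseDisjoint (↑(Finset.Icc 1 M))
      (fun m : ℕ => Set.Ico (((m : ℝ) - 1) * τ) ((m : ℝ) * τ)) := by
    intro i hi j hj hij
    rcases lt_or_gt_of_ne hij with h | h
    · have hij' : (i : ℝ) ≤ (j : ℝ) - 1 := by
        have : (i : ℝ) + 1 ≤ (j : ℝ) := by exact_mod_cast h
        linarith
      refine Set.Ico_disjoint_Ico.mpr ?_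
      refine le_trans (min_le_left _ _) (le_trans ?_ (le_max_right _ _))
      nlinarith
    · have hij' : (j : ℝ) ≤ (i : ℝ) - 1 := by
        have : (j : ℝ) + 1 ≤ (i : ℝ) := by exact_mod_cast h
        linarith
      refine Set.Ico_disjoint_Ico.mpr ?_
      refine le_trans (min_le_right _ _) (le_trans ?_ (le_max_left _ _))
      nlinarith
  have hsumR : (∑ m ∈ Finset.Icc 1 M,
      ∫⁻ s in Set.Icc (((m : ℝ) - 1) * τ) ((m : ℝ) * τ), R s) ≤ ∫⁻ s in Set.Ico (0 : ℝ) T, R s := by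
    have e1 : ∀ m : ℕ, (∫⁻ s in Set.Icc (((m : ℝ) - 1) * τ) ((m : ℝ) * τ), R s)
        = ∫⁻ s in Set.Ico (((m : ℝ) - 1) * τ) ((m : ℝ) * τ), R s := by
      intro m
      rw [restrict_Ico_eq_restrict_Icc]
    simp_rw [e1]
    rw [← lintegral_biUnion_finset hdisj (fun m _ => measurableSet_Ico) R]
    refine lintegral_mono_set ?_
    refine Set.iUnion₂_subset fun m hm => ?_
    obtain ⟨hm1, hm2⟩ := Finset.mem_Icc.mp hm
    have hm1' : (1 : ℝ) ≤ (m : ℝ) := by exact_mod_cast hm1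
    have hm2' : ((m : ℝ)) ≤ (M : ℝ) := by exact_mod_cast hm2
    refine Set.Ico_subset_Ico ?_ ?_ <;> nlinarith
  -- total ennreal bound
  have hτen : ENNReal.ofReal τ ≠ 0 := by simp [ENNReal.ofReal_eq_zero, not_le, hτ0]
  have hτeninv : (ENNReal.ofReal τ)⁻¹ ≠ ⊤ := by rwa [Ne, ENNReal.inv_eq_top]
  have hGsum : (∑ m ∈ Finset.Icc 1 M,
      ((ENNReal.ofReal τ)⁻¹ * ∫⁻ s in Set.Icc (((m : ℝ) - 1) * τ) ((m : ℝ) * τ), R s))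
      ≤ ENNReal.ofReal ((2 / (α * r + 1)) * τ ^ (α * r) * K ^ r) := by
    rw [← Finset.mul_sum]
    calc (ENNReal.ofReal τ)⁻¹ * ∑ m ∈ Finset.Icc 1 M,
          ∫⁻ s in Set.Icc (((m : ℝ) - 1) * τ) ((m : ℝ) * τ), R s
        ≤ (ENNReal.ofReal τ)⁻¹ * ∫⁻ s in Set.Ico (0 : ℝ) T, R s := mul_le_mul_right hsumR _
      _ = (ENNReal.ofReal τ)⁻¹ *
            ∫⁻ h' in Set.Icc (-τ) τ, ∫⁻ s in Set.Ico (0 : ℝ) T, χ (h' + s) * Ψ s (h' + s) := by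
          rw [hTon]
      _ ≤ (ENNReal.ofReal τ)⁻¹ * ENNReal.ofReal ((2 * (τ ^ (α * r + 1) / (α * r + 1))) * K ^ r) :=
          mul_le_mul_right hbound_lint _
      _ = ENNReal.ofReal ((2 / (α * r + 1)) * τ ^ (α * r) * K ^ r) := by
          rw [← ENNReal.ofReal_inv_of_pos hτ0, ← ENNReal.ofReal_mul (by positivity)]
          congr 1
          have hτp : τ ^ (α * r + 1) = τ ^ (α * r) * τ := by
            rw [Real.rpow_add hτ0, Real.rpow_one]
          rw [hτp]
          field_simp
  have hfin' : ∀ m ∈ Finset.Icc 1 M,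
      ((ENNReal.ofReal τ)⁻¹ * ∫⁻ s in Set.Icc (((m : ℝ) - 1) * τ) ((m : ℝ) * τ), R s) ≠ ⊤ := by
    intro m hm
    refine ne_top_of_le_ne_top ENNReal.ofReal_ne_top (le_trans ?_ hGsum)
    exact Finset.single_le_sum
      (f := fun m : ℕ => ((ENNReal.ofReal τ)⁻¹ *
        ∫⁻ s in Set.Icc (((m : ℝ) - 1) * τ) ((m : ℝ) * τ), R s))
      (fun i _ => zero_le) hm
  have hAm : ∀ m ∈ Finset.Icc 1 M,
      (∫ s in Set.Icc (((m : ℝ) - 1) * τ) ((m : ℝ) * τ),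
        ‖f s - (1 / τ) • ∫ t in Set.Icc (((m : ℝ) - 1) * τ) ((m : ℝ) * τ), f t‖ ^ r)
      ≤ ((ENNReal.ofReal τ)⁻¹ * ∫⁻ s in Set.Icc (((m : ℝ) - 1) * τ) ((m : ℝ) * τ), R s).toReal := by
    intro m hm
    have hab : ((m : ℝ)) * τ - ((m : ℝ) - 1) * τ = τ := by ring
    set a := ((m : ℝ) - 1) * τ with hadef
    set b := ((m : ℝ)) * τ with hbdef
    set c := (1 / τ) • ∫ t in Set.Icc a b, f t with hcdef
    have hsm : AEStronglyMeasurable (fun s => ‖f s - c‖ ^ r)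
        (volume.restrict (Set.Icc a b)) :=
      ((hf.sub stronglyMeasurable_const).norm.measurable.pow_const r).aestronglyMeasurable
    have heq : (∫ s in Set.Icc a b, ‖f s - c‖ ^ r)
        = (∫⁻ s in Set.Icc a b, ENNReal.ofReal (‖f s - c‖ ^ r)).toReal := by
      rw [integral_eq_lintegral_of_nonneg_ae
        (Filter.Eventually.of_forall fun s => by positivity) hsm]
    rw [heq]
    refine ENNReal.toReal_mono (hfin' m hm) ?_
    calc ∫⁻ s in Set.Icc a b, ENNReal.ofReal (‖f s - c‖ ^ r)
        ≤ ∫⁻ s in Set.Icc a b, ((ENNReal.ofReal τ)⁻¹ * ∫⁻ t in Set.Icc a b, Ψ s t) := by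
          refine lintegral_mono fun s => ?_
          exact jensen_aux r τ hr hτ0 a b hab f hf.aestronglyMeasurable (f s)
      _ ≤ ∫⁻ s in Set.Icc a b, ((ENNReal.ofReal τ)⁻¹ * R s) := by
          refine setLIntegral_mono (measurable_const.mul hRm) fun s hs => ?_
          exact mul_le_mul_right (hstep2 m hm s hs) _
      _ = (ENNReal.ofReal τ)⁻¹ * ∫⁻ s in Set.Icc a b, R s := lintegral_const_mul' _ _ hτeninv
  calc (∑ m ∈ Finset.Icc 1 M, ∫ s in Set.Icc (((m : ℝ) - 1) * τ) ((m : ℝ) * τ),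
        ‖f s - (1 / τ) • ∫ t in Set.Icc (((m : ℝ) - 1) * τ) ((m : ℝ) * τ), f t‖ ^ r)
      ≤ ∑ m ∈ Finset.Icc 1 M,
          ((ENNReal.ofReal τ)⁻¹ * ∫⁻ s in Set.Icc (((m : ℝ) - 1) * τ) ((m : ℝ) * τ), R s).toReal :=
        Finset.sum_le_sum hAm
    _ = (∑ m ∈ Finset.Icc 1 M,
          ((ENNReal.ofReal τ)⁻¹ * ∫⁻ s in Set.Icc (((m : ℝ) - 1) * τ) ((m : ℝ) * τ), R s)).toReal :=
        (ENNReal.toReal_sum hfin').symm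
    _ ≤ (ENNReal.ofReal ((2 / (α * r + 1)) * τ ^ (α * r) * K ^ r)).toReal :=
        ENNReal.toReal_mono ENNReal.ofReal_ne_top hGsum
    _ = (2 / (α * r + 1)) * τ ^ (α * r) * K ^ r :=
        ENNReal.toReal_ofReal (mul_nonneg (mul_nonneg (by positivity)
          (Real.rpow_nonneg hτ0.le _)) (Real.rpow_nonneg hKnn _))

lemma nik_nonneg {X : Type*} [NormedAddCommGroup X] [NormedSpace ℝ X] [CompleteSpace X]
    (α r T : ℝ) (hr0 : 0 < r) (hT : 0 < T) (f : ℝ → X)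
    (hbdd : BddAbove {x : ℝ | ∃ h ∈ Set.Ioc (0 : ℝ) T,
      x = h ^ (-α) * (∫ s in Set.Icc (0 : ℝ) (T - h), ‖f (s + h) - f s‖ ^ r) ^ (1 / r)}) :
    0 ≤ sSup {x : ℝ | ∃ h ∈ Set.Ioc (0 : ℝ) T,
      x = h ^ (-α) * (∫ s in Set.Icc (0 : ℝ) (T - h), ‖f (s + h) - f s‖ ^ r) ^ (1 / r)} := by
  refine le_csSup hbdd ⟨T, ⟨hT, le_rfl⟩, ?_⟩
  rw [sub_self]
  have hz : volume.restrict (Set.Icc (0 : ℝ) 0) = 0 := by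
    rw [Measure.restrict_eq_zero]; simp
  rw [hz, integral_zero_measure, Real.zero_rpow (by positivity : (1 : ℝ) / r ≠ 0), mul_zero]


/-- The Nikolskii seminorm `[f] = sup_{0 < h ≤ T} h^(-α) (∫_{[0,T-h]} ‖f(s+h) - f(s)‖^r ds)^(1/r)`
of a path `f : ℝ → X` (as a supremum in `ℝ`). -/
noncomputable def nikSeminorm (X : Type*) [NormedAddCommGroup X] (T α r : ℝ) (f : ℝ → X) : ℝ :=
  sSup {x : ℝ | ∃ h ∈ Set.Ioc (0 : ℝ) T,
    x = h ^ (-α) * (∫ s in Set.Icc (0 : ℝ) (T - h), ‖f (s + h) - f s‖ ^ r) ^ (1 / r)}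

/-- **Nikolskii approximation quality of time averages.** With `τ = T/M`, `t_m = mτ`,
`I_m = [t_{m-1}, t_m]` and `⟨u⟩_m = (1/τ)∫_{I_m} u`, if the paths of `u` are Bochner
`r`-integrable with finite Nikolskii seminorm, square-integrable in `ω`, then
`(E[(Σ_m ∫_{I_m} ‖u(s) - ⟨u⟩_m‖^r ds)^(2/r)])^(1/2)
  ≤ (2^(αr+1)/(αr+1))^(1/r) τ^α (E[[u]²])^(1/2)`. -/
theorem nikolskii_average_approximation
    (α r : ℝ) (hα : α ∈ Set.Ioo (0 : ℝ) 1) (hr : 1 ≤ r)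
    {X : Type*} [NormedAddCommGroup X] [NormedSpace ℝ X] [CompleteSpace X]
    {Ω : Type*} [MeasurableSpace Ω] (P : Measure Ω) [IsProbabilityMeasure P]
    (T : ℝ) (hT : 0 < T) (M : ℕ) (hM : 1 ≤ M) (τ : ℝ) (hτ : τ = T / M)
    (u : Ω → ℝ → X)
    (hmeas : StronglyMeasurable (Function.uncurry u))
    (hint : ∀ᵐ ω ∂P, MemLp (u ω) (ENNReal.ofReal r) (volume.restrict (Set.Icc 0 T)))
    (hfin : ∀ᵐ ω ∂P, BddAbove {x : ℝ | ∃ h ∈ Set.Ioc (0 : ℝ) T,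
      x = h ^ (-α) * (∫ s in Set.Icc (0 : ℝ) (T - h), ‖u ω (s + h) - u ω s‖ ^ r) ^ (1 / r)})
    (hL2 : Integrable (fun ω => (nikSeminorm X T α r (u ω)) ^ 2) P) :
    (∫ ω, (∑ m ∈ Finset.Icc 1 M,
        ∫ s in Set.Icc (((m : ℝ) - 1) * τ) ((m : ℝ) * τ),
          ‖u ω s - (1 / τ) • ∫ t in Set.Icc (((m : ℝ) - 1) * τ) ((m : ℝ) * τ), u ω t‖ ^ r)
          ^ (2 / r) ∂P) ^ ((1 : ℝ) / 2)
      ≤ (2 ^ (α * r + 1) / (α * r + 1)) ^ (1 / r) * τ ^ α *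
        (∫ ω, (nikSeminorm X T α r (u ω)) ^ 2 ∂P) ^ ((1 : ℝ) / 2) := by
  obtain ⟨hα0, hα1⟩ := hα
  have hr0 : 0 < r := lt_of_lt_of_le one_pos hr
  have hM0 : (0 : ℝ) < M := by exact_mod_cast hM
  have hτ0 : 0 < τ := by rw [hτ]; positivity
  have har1 : (0 : ℝ) < α * r + 1 := by positivity
  set K : Ω → ℝ := fun ω => nikSeminorm X T α r (u ω) with hKdef
  set B : Ω → ℝ := fun ω => ∑ m ∈ Finset.Icc 1 M,
      ∫ s in Set.Icc (((m : ℝ) - 1) * τ) ((m : ℝ) * τ),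
        ‖u ω s - (1 / τ) • ∫ t in Set.Icc (((m : ℝ) - 1) * τ) ((m : ℝ) * τ), u ω t‖ ^ r
    with hBdef
  have hBnn : ∀ ω, 0 ≤ B ω := fun ω => Finset.sum_nonneg fun m _ =>
    integral_nonneg fun s => Real.rpow_nonneg (norm_nonneg _) r
  set c₁ : ℝ := (2 / (α * r + 1)) ^ (2 / r) * τ ^ (2 * α) with hc₁def
  have hc₁nn : 0 ≤ c₁ := mul_nonneg (Real.rpow_nonneg (by positivity) _)
    (Real.rpow_nonneg hτ0.le _)
  have hae : ∀ᵐ ω ∂P, B ω ^ (2 / r) ≤ c₁ * K ω ^ 2 := by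
    filter_upwards [hint, hfin] with ω h1 h2
    have hum : StronglyMeasurable (u ω) :=
      hmeas.comp_measurable (measurable_const.prodMk measurable_id)
    have hB := pointwise_bound α r T τ hα0 hr hT M hM hτ (u ω) hum h1 h2
    have hKnn : 0 ≤ K ω := nik_nonneg α r T hr0 hT (u ω) h2
    have hKr : nikSeminorm X T α r (u ω) = sSup {x : ℝ | ∃ h ∈ Set.Ioc (0 : ℝ) T,
        x = h ^ (-α) * (∫ s in Set.Icc (0 : ℝ) (T - h), ‖u ω (s + h) - u ω s‖ ^ r) ^ (1 / r)} :=
      rfl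
    have hB' : B ω ≤ (2 / (α * r + 1)) * τ ^ (α * r) * K ω ^ r := hB
    have h3 : B ω ^ (2 / r) ≤ ((2 / (α * r + 1)) * τ ^ (α * r) * K ω ^ r) ^ (2 / r) :=
      Real.rpow_le_rpow (hBnn ω) hB' (by positivity)
    refine le_trans h3 (le_of_eq ?_)
    rw [Real.mul_rpow (mul_nonneg (by positivity) (Real.rpow_nonneg hτ0.le _))
        (Real.rpow_nonneg hKnn _),
      Real.mul_rpow (by positivity) (Real.rpow_nonneg hτ0.le _),
      ← Real.rpow_mul hτ0.le, ← Real.rpow_mul hKnn]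
    have e1 : α * r * (2 / r) = 2 * α := by field_simp
    have e2 : r * (2 / r) = 2 := by field_simp
    rw [e1, e2, hc₁def]
    have e3 : K ω ^ (2 : ℝ) = K ω ^ (2 : ℕ) := by
      rw [← Real.rpow_natCast (K ω) 2]
      norm_num
    rw [e3]
  have hintc : Integrable (fun ω => c₁ * K ω ^ 2) P := hL2.const_mul c₁
  have hI : ∫ ω, B ω ^ (2 / r) ∂P ≤ ∫ ω, c₁ * K ω ^ 2 ∂P :=
    integral_mono_of_nonneg
      (Filter.Eventually.of_forall fun ω => Real.rpow_nonneg (hBnn ω) _) hintc hae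
  have hImul : ∫ ω, c₁ * K ω ^ 2 ∂P = c₁ * ∫ ω, K ω ^ 2 ∂P := integral_const_mul c₁ _
  have hEnn : 0 ≤ ∫ ω, K ω ^ 2 ∂P := integral_nonneg fun ω => sq_nonneg _
  have h4 : (∫ ω, B ω ^ (2 / r) ∂P) ^ ((1 : ℝ) / 2) ≤ (c₁ * ∫ ω, K ω ^ 2 ∂P) ^ ((1 : ℝ) / 2) := by
    refine Real.rpow_le_rpow ?_ (le_trans hI (le_of_eq hImul)) (by norm_num)
    exact integral_nonneg fun ω => Real.rpow_nonneg (hBnn ω) _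
  refine le_trans h4 ?_
  rw [Real.mul_rpow hc₁nn hEnn, hc₁def,
    Real.mul_rpow (Real.rpow_nonneg (by positivity) _) (Real.rpow_nonneg hτ0.le _),
    ← Real.rpow_mul (by positivity : (0:ℝ) ≤ 2 / (α * r + 1)), ← Real.rpow_mul hτ0.le]
  have e4 : 2 / r * (1 / 2) = 1 / r := by field_simp
  have e5 : 2 * α * (1 / 2) = α := by ring
  rw [e4, e5]
  refine mul_le_mul_of_nonneg_right (mul_le_mul_of_nonneg_right ?_
    (Real.rpow_nonneg hτ0.le _)) (Real.rpow_nonneg hEnn _)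
  refine Real.rpow_le_rpow (by positivity) ?_ (by positivity)
  have h2le : (2 : ℝ) ≤ 2 ^ (α * r + 1) := by
    calc (2 : ℝ) = 2 ^ (1 : ℝ) := (Real.rpow_one 2).symm
      _ ≤ 2 ^ (α * r + 1) := Real.rpow_le_rpow_of_exponent_le (by norm_num) (by nlinarith)
  gcongr
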